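/- Let W ⊂ ℝ^d be a convex body with inradius r(W) > 0 and let 0 < r_0/2 ≤ r(W). Then V_d(W) ≤ (2 r(W)/r_0) · V_d(∂⁻_{r_0/2} W), where ∂⁻_s W = {z ∈ W : dist(z, ∂W) ≤ s}. -/

import Mathlib

open MeasureTheory Metric Set

/-- The inradius of a set `W`: the supremum of radii of closed balls contained in `W`. -/
noncomputable def inradius {d : ℕ} (W : Set (EuclideanSpace ℝ (Fin d))) : ℝ :=
  sSup {r : ℝ | ∃ c : EuclideanSpace ℝ (Fin d), Metric.closedBall c r ⊆ W}

section Aux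

open Filter
open scoped ENNReal NNReal RealInnerProductSpace Topology

variable {d : ℕ} {W : Set (EuclideanSpace ℝ (Fin d))}

/-- An expansive map (defined on a set) does not decrease Lebesgue measure. -/
lemma meas_le_meas_image {A : Set (EuclideanSpace ℝ (Fin d))}
    {T : EuclideanSpace ℝ (Fin d) → EuclideanSpace ℝ (Fin d)}
    (hT : ∀ x ∈ A, ∀ y ∈ A, dist x y ≤ dist (T x) (T y)) :
    volume A ≤ volume (T '' A) := by
  classical
  set S := T '' A with hS
  set u := Function.invFunOn T A with hu
  have hmem : ∀ y ∈ S, u y ∈ A ∧ T (u y) = y := by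
    intro y hy
    obtain ⟨a, ha, rfl⟩ := hy
    exact ⟨Function.invFunOn_mem ⟨a, ha, rfl⟩, Function.invFunOn_eq ⟨a, ha, rfl⟩⟩
  have hAsub : A ⊆ u '' S := by
    intro z hz
    refine ⟨T z, mem_image_of_mem _ hz, ?_⟩
    have hw := hmem (T z) (mem_image_of_mem _ hz)
    have : dist (u (T z)) z ≤ dist (T (u (T z))) (T z) := hT _ hw.1 _ hz
    rw [hw.2, dist_self] at this
    exact dist_le_zero.1 this
  refine le_trans (measure_mono hAsub) ?_
  refine ENNReal.le_of_forall_pos_le_add fun ε hε hfin => ?_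
  obtain ⟨t, r, htc, hts, -, hcov, hsum⟩ :=
    Besicovitch.exists_closedBall_covering_tsum_measure_le (volume : Measure (EuclideanSpace ℝ (Fin d)))
      (ε := (ε : ℝ≥0∞)) (by exact_mod_cast hε.ne') (fun _ => Ioi (0:ℝ)) S
      (fun x _ δ hδ => ⟨δ/2, ⟨half_pos hδ, half_pos hδ, half_lt_self hδ⟩⟩)
  have himg : u '' S ⊆ ⋃ x ∈ t, closedBall (u x) (r x) := by
    rintro _ ⟨y, hy, rfl⟩
    obtain ⟨x, hx, hyx⟩ := mem_iUnion₂.1 (hcov hy)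
    refine mem_iUnion₂.2 ⟨x, hx, ?_⟩
    have h1 := hmem y hy
    have h2 := hmem x (hts hx)
    have : dist (u y) (u x) ≤ dist y x := by
      calc dist (u y) (u x) ≤ dist (T (u y)) (T (u x)) := hT _ h1.1 _ h2.1
      _ = dist y x := by rw [h1.2, h2.2]
    exact mem_closedBall.2 (this.trans (mem_closedBall.1 hyx))
  calc volume (u '' S) ≤ ∑' (x : t), volume (closedBall (u x) (r x)) :=
        le_trans (measure_mono himg) (measure_biUnion_le volume htc _)
  _ = ∑' (x : t), volume (closedBall (x : EuclideanSpace ℝ (Fin d)) (r x)) := by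
      refine tsum_congr fun x => ?_
      rw [Measure.addHaar_closedBall_center, Measure.addHaar_closedBall_center volume (x : EuclideanSpace ℝ (Fin d))]
  _ ≤ volume S + ε := hsum

lemma cross_frontier {z x : EuclideanSpace ℝ (Fin d)} (hz : z ∈ W) (hx : x ∉ W) :
    ∃ p ∈ frontier W, dist z p ≤ dist z x := by
  set γ : ℝ → EuclideanSpace ℝ (Fin d) := fun τ => z + τ • (x - z) with hγ
  have hγc : Continuous γ := by fun_prop
  set F : ℝ → ℝ := fun τ => infDist (γ τ) Wᶜ - infDist (γ τ) W with hF
  have hFc : ContinuousOn F (Icc 0 1) :=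
    (((continuous_infDist_pt Wᶜ).comp hγc).sub ((continuous_infDist_pt W).comp hγc)).continuousOn
  have hγ0 : γ 0 = z := by simp [hγ]
  have hγ1 : γ 1 = x := by simp [hγ]
  have h0 : 0 ≤ F 0 := by
    simp only [hF, hγ0, infDist_zero_of_mem hz, sub_zero]
    exact infDist_nonneg
  have h1 : F 1 ≤ 0 := by
    have : infDist (γ 1) Wᶜ = 0 := by rw [hγ1]; exact infDist_zero_of_mem hx
    simp only [hF, this, zero_sub, neg_nonpos]
    exact infDist_nonneg
  obtain ⟨τ, hτ, hFτ⟩ := intermediate_value_Icc' zero_le_one hFc ⟨h1, h0⟩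
  have heq : infDist (γ τ) Wᶜ = infDist (γ τ) W := by
    have := hFτ
    simp only [hF] at this
    linarith [this]
  have hWne' : W.Nonempty := ⟨z, hz⟩
  have hWc : Wᶜ.Nonempty := ⟨x, hx⟩
  have hpf : γ τ ∈ frontier W := by
    rw [frontier_eq_closure_inter_closure]
    by_cases hp : γ τ ∈ W
    · have h2 : infDist (γ τ) W = 0 := infDist_zero_of_mem hp
      exact ⟨subset_closure hp, (mem_closure_iff_infDist_zero hWc).2 (heq.trans h2)⟩
    · have h2 : infDist (γ τ) Wᶜ = 0 := infDist_zero_of_mem hp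
      exact ⟨(mem_closure_iff_infDist_zero hWne').2 (by rw [← heq]; exact h2), subset_closure hp⟩
  refine ⟨γ τ, hpf, ?_⟩
  have hd : dist z (γ τ) = |τ| * dist z x := by
    simp only [hγ]
    rw [dist_self_add_right, norm_smul, Real.norm_eq_abs, dist_eq_norm, norm_sub_rev]
  rw [hd, abs_of_nonneg hτ.1]
  nlinarith [dist_nonneg (x := z) (y := x), hτ.2]

lemma infDist_frontier_le {z x : EuclideanSpace ℝ (Fin d)} (hz : z ∈ W) (hx : x ∉ W) :
    infDist z (frontier W) ≤ dist z x := by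
  obtain ⟨p, hp, hd⟩ := cross_frontier hz hx
  exact (infDist_le_dist_of_mem hp).trans hd

lemma closedBall_infDist_subset (hWc : IsClosed W) {z : EuclideanSpace ℝ (Fin d)} (hz : z ∈ W) :
    closedBall z (infDist z (frontier W)) ⊆ W := by
  intro x hx
  by_contra hxW
  have hW : W.Nonempty := ⟨z, hz⟩
  have hpos : 0 < infDist x W := (hWc.notMem_iff_infDist_pos hW).1 hxW
  have hzx : z ≠ x := fun h => hxW (h ▸ hz)
  set D := dist z x with hD
  have hd : 0 < D := dist_pos.2 hzx
  set ε := min (infDist x W) D with hε'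
  have hε : 0 < ε := lt_min hpos hd
  have hεD : ε ≤ D := min_le_right _ _
  set c : ℝ := 1 - ε / (2 * D) with hc
  have hc0 : 0 ≤ c := by
    have : ε / (2 * D) ≤ 1 / 2 := by
      rw [div_le_div_iff₀ (by positivity) (by norm_num)]
      nlinarith
    simp only [hc]; linarith
  set x' := z + c • (x - z) with hx'
  have hdzx' : dist z x' = c * D := by
    simp only [hx']
    rw [dist_self_add_right, norm_smul, Real.norm_eq_abs, abs_of_nonneg hc0, hD, dist_eq_norm,
      norm_sub_rev]
  have hdxx' : dist x x' = ε / 2 := by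
    have hveq : x - x' = (1 - c) • (x - z) := by
      simp only [hx']
      module
    rw [dist_eq_norm, hveq, norm_smul, Real.norm_eq_abs]
    have h1c : 1 - c = ε / (2 * D) := by simp [hc]
    rw [h1c, abs_of_nonneg (by positivity)]
    have : ‖x - z‖ = D := by rw [hD, dist_eq_norm, norm_sub_rev]
    rw [this]
    field_simp
  have hx'W : x' ∉ W := by
    intro h
    have h2 : infDist x W ≤ ε / 2 := by
      rw [← hdxx']
      exact infDist_le_dist_of_mem h
    have h3 : ε ≤ infDist x W := min_le_left _ _
    linarith
  have h4 : infDist z (frontier W) ≤ dist z x' := infDist_frontier_le hz hx'W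
  have h5 : dist x z ≤ infDist z (frontier W) := mem_closedBall.1 hx
  rw [hdzx'] at h4
  have h6 : c * D = D - ε / 2 := by
    simp only [hc]
    field_simp
  rw [dist_comm] at h5
  rw [h6] at h4
  linarith

lemma support_vec (hWconv : Convex ℝ W) (hWcomp : IsCompact W)
    (hint : (interior W).Nonempty) (hfr : (frontier W).Nonempty)
    {z : EuclideanSpace ℝ (Fin d)} (hz : z ∈ W) :
    ∃ v : EuclideanSpace ℝ (Fin d), ‖v‖ = 1 ∧ ∀ y ∈ W,
      infDist y (frontier W) ≤ infDist z (frontier W) - ⟪y - z, v⟫ := by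
  have hfc : IsCompact (frontier W) :=
    hWcomp.of_isClosed_subset isClosed_frontier hWcomp.isClosed.frontier_subset
  obtain ⟨q, hqf, hq⟩ := hfc.exists_infDist_eq_dist hfr z
  have hqnotint : q ∉ interior W := hqf.2
  obtain ⟨f, hf⟩ := geometric_hahn_banach_open_point hWconv.interior isOpen_interior hqnotint
  set w := (InnerProductSpace.toDual ℝ (EuclideanSpace ℝ (Fin d))).symm f with hw
  have hwapp : ∀ p, ⟪w, p⟫ = f p := fun p => InnerProductSpace.toDual_symm_apply
  obtain ⟨a, ha⟩ := hint
  have hwne : w ≠ 0 := by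
    intro h
    have h2 := hf a ha
    rw [← hwapp, ← hwapp, h] at h2
    simp at h2
  set v := ‖w‖⁻¹ • w with hv'
  have hv : ‖v‖ = 1 := norm_smul_inv_norm hwne
  have hsupp : ∀ y ∈ W, ⟪v, y - q⟫ ≤ 0 := by
    intro y hy
    have key : ⟪w, y⟫ ≤ ⟪w, q⟫ := by
      have hcont : Continuous fun θ : ℝ => (1 - θ) * ⟪w, a⟫ + θ * ⟪w, y⟫ := by fun_prop
      have htend : Tendsto (fun θ : ℝ => (1 - θ) * ⟪w, a⟫ + θ * ⟪w, y⟫) (𝓝[<] (1:ℝ))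
          (𝓝 ⟪w, y⟫) := by
        have h3 := (hcont.tendsto 1).mono_left (nhdsWithin_le_nhds (s := Iio (1:ℝ)))
        simpa using h3
      refine le_of_tendsto htend ?_
      filter_upwards [Ioo_mem_nhdsLT_of_mem (⟨zero_lt_one, le_refl (1:ℝ)⟩ : (1:ℝ) ∈ Ioc 0 1)]
        with θ hθ
      have hcombo : (1 - θ) • a + θ • y ∈ interior W :=
        hWconv.combo_interior_closure_mem_interior ha (subset_closure hy)
          (by linarith [hθ.2]) hθ.1.le (by ring)
      have h4 := (hf _ hcombo).le
      rw [← hwapp, ← hwapp, inner_add_right, real_inner_smul_right, real_inner_smul_right] at h4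
      linarith
    have h5 : ⟪v, y - q⟫ = ‖w‖⁻¹ * ⟪w, y - q⟫ := real_inner_smul_left _ _ _
    rw [h5, inner_sub_right]
    have : (0:ℝ) ≤ ‖w‖⁻¹ := by positivity
    nlinarith
  set δz := infDist z (frontier W) with hδz
  have hδz0 : 0 ≤ δz := infDist_nonneg
  have hin : z + δz • v ∈ W := by
    apply closedBall_infDist_subset hWcomp.isClosed hz
    rw [mem_closedBall, dist_comm, dist_self_add_right, norm_smul, Real.norm_eq_abs,
      abs_of_nonneg hδz0, hv, mul_one]
  have hvv : ⟪v, v⟫ = 1 := by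
    rw [real_inner_self_eq_norm_sq, hv]; norm_num
  have h2 : δz ≤ ⟪v, q - z⟫ := by
    have h6 := hsupp _ hin
    have h7 : z + δz • v - q = (z - q) + δz • v := by module
    rw [h7, inner_add_right, real_inner_smul_right, hvv, mul_one] at h6
    have h8 : ⟪v, q - z⟫ = -⟪v, z - q⟫ := by
      rw [← inner_neg_right]; congr 1; module
    linarith
  have h3 : ⟪v, q - z⟫ ≤ δz := by
    calc ⟪v, q - z⟫ ≤ ‖v‖ * ‖q - z‖ := real_inner_le_norm _ _
    _ = ‖q - z‖ := by rw [hv, one_mul]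
    _ = δz := by rw [hq, dist_eq_norm, norm_sub_rev]
  have heqq : ⟪v, q - z⟫ = δz := le_antisymm h3 h2
  refine ⟨v, hv, fun y hy => ?_⟩
  have hβ : infDist y (frontier W) ≤ ⟪v, q - y⟫ := by
    set β := ⟪v, q - y⟫ with hβ'
    have hβ0 : 0 ≤ β := by
      have h9 := hsupp y hy
      have h10 : β = -⟪v, y - q⟫ := by
        rw [hβ', ← inner_neg_right]; congr 1; module
      linarith
    refine le_of_forall_pos_le_add fun ε hε => ?_
    set p := y + (β + ε) • v with hp'
    have hpW : p ∉ W := by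
      intro hpW
      have h11 := hsupp p hpW
      have h12 : p - q = (y - q) + (β + ε) • v := by rw [hp']; module
      rw [h12, inner_add_right, real_inner_smul_right, hvv, mul_one] at h11
      have h13 : ⟪v, y - q⟫ = -β := by
        rw [hβ', ← inner_neg_right]; congr 1; module
      rw [h13] at h11
      linarith
    have h14 := infDist_frontier_le hy hpW
    rw [hp', dist_self_add_right, norm_smul, Real.norm_eq_abs, hv, mul_one,
      abs_of_nonneg (by linarith)] at h14
    exact h14
  calc infDist y (frontier W) ≤ ⟪v, q - y⟫ := hβ
  _ = ⟪v, q - z⟫ + ⟪v, z - y⟫ := by rw [← inner_add_right]; congr 1; module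
  _ = δz - ⟪y - z, v⟫ := by
      rw [heqq]
      have hzy : z - y = -(y - z) := by module
      rw [hzy, inner_neg_right, real_inner_comm]
      ring

lemma layer_mono (hWconv : Convex ℝ W) (hWcomp : IsCompact W)
    (hint : (interior W).Nonempty) (hfr : (frontier W).Nonempty)
    {s' s h : ℝ} (hs' : 0 ≤ s') (hss : s' ≤ s) :
    volume {z | z ∈ W ∧ s < infDist z (frontier W) ∧ infDist z (frontier W) ≤ s + h}
      ≤ volume {z | z ∈ W ∧ s' < infDist z (frontier W) ∧ infDist z (frontier W) ≤ s' + h} := by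
  classical
  set δ : EuclideanSpace ℝ (Fin d) → ℝ := fun z => infDist z (frontier W) with hδ
  set c := s - s' with hc
  have hc0 : 0 ≤ c := by simp [hc]; linarith
  set v : EuclideanSpace ℝ (Fin d) → EuclideanSpace ℝ (Fin d) := fun z =>
    if hzW : z ∈ W then Classical.choose (support_vec hWconv hWcomp hint hfr hzW) else 0 with hv'
  have hv : ∀ z (hz : z ∈ W), ‖v z‖ = 1 ∧ ∀ y ∈ W, δ y ≤ δ z - ⟪y - z, v z⟫ := by
    intro z hz
    simp only [hv', dif_pos hz]
    exact Classical.choose_spec (support_vec hWconv hWcomp hint hfr hz)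
  set T : EuclideanSpace ℝ (Fin d) → EuclideanSpace ℝ (Fin d) := fun z => z + c • v z with hT'
  set A := {z | z ∈ W ∧ s < δ z ∧ δ z ≤ s + h} with hA
  set B := {z | z ∈ W ∧ s' < δ z ∧ δ z ≤ s' + h} with hB
  have hdistT : ∀ z ∈ A, dist z (T z) = c := by
    intro z hzA
    rw [hT']
    simp only
    rw [dist_self_add_right, norm_smul, Real.norm_eq_abs, abs_of_nonneg hc0,
      (hv z hzA.1).1, mul_one]
  have hTW : ∀ z ∈ A, T z ∈ W := by
    intro z hzA
    apply closedBall_infDist_subset hWcomp.isClosed hzA.1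
    rw [mem_closedBall, dist_comm]
    rw [hdistT z hzA]
    have := hzA.2.1
    have hcs : c ≤ s := by simp [hc]; linarith
    exact hcs.trans this.le
  have hTB : ∀ z ∈ A, T z ∈ B := by
    intro z hzA
    have hzW := hzA.1
    have hTzW := hTW z hzA
    have hkey := (hv z hzW).2 (T z) hTzW
    have hinner : ⟪T z - z, v z⟫ = c := by
      have : T z - z = c • v z := by rw [hT']; simp only; module
      rw [this, real_inner_smul_left, real_inner_self_eq_norm_sq, (hv z hzW).1]
      norm_num
    rw [hinner] at hkey
    have hlip : δ z ≤ δ (T z) + c := by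
      have h15 := infDist_le_infDist_add_dist (s := frontier W) (x := z) (y := T z)
      rw [hdistT z hzA] at h15
      exact h15
    refine ⟨hTzW, ?_, ?_⟩
    · have := hzA.2.1
      simp only [hc] at hlip ⊢
      linarith
    · have := hzA.2.2
      simp only [hc] at hkey ⊢
      linarith
  have hexp : ∀ x ∈ A, ∀ y ∈ A, dist x y ≤ dist (T x) (T y) := by
    intro x hx y hy
    have hkx := (hv x hx.1).2 y hy.1
    have hky := (hv y hy.1).2 x hx.1
    have hmono : 0 ≤ ⟪x - y, v x - v y⟫ := by
      have h1 : ⟪y - x, v x⟫ ≤ δ x - δ y := by linarith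
      have h2 : ⟪x - y, v y⟫ ≤ δ y - δ x := by linarith
      have h3 : ⟪x - y, v x - v y⟫ = -⟪y - x, v x⟫ - ⟪x - y, v y⟫ := by
        rw [inner_sub_right]
        have h4 : y - x = -(x - y) := by module
        rw [h4, inner_neg_left]
        ring
      rw [h3]
      linarith
    have hab : T x - T y = (x - y) + c • (v x - v y) := by rw [hT']; simp only; module
    have hsq : ‖x - y‖ ^ 2 ≤ ‖T x - T y‖ ^ 2 := by
      rw [hab, norm_add_sq_real, real_inner_smul_right]
      have h5 : 0 ≤ ‖c • (v x - v y)‖ ^ 2 := by positivity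
      nlinarith
    have := Real.sqrt_le_sqrt hsq
    rw [Real.sqrt_sq (norm_nonneg _), Real.sqrt_sq (norm_nonneg _)] at this
    rw [dist_eq_norm, dist_eq_norm]
    exact this
  calc volume A ≤ volume (T '' A) := meas_le_meas_image hexp
  _ ≤ volume B := by
      apply measure_mono
      rintro _ ⟨z, hz, rfl⟩
      exact hTB z hz

lemma numeric_lemma {m : ℝ → ℝ} {r t : ℝ} (hr : 0 < r) (ht : 0 < t) (htr : t ≤ r)
    (hnn : ∀ s, 0 ≤ m s)
    (hmono : ∀ a b : ℝ, a ≤ b → m b ≤ m a)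
    (hD : ∀ s' s h : ℝ, 0 ≤ s' → s' ≤ s → 0 ≤ h → m s - m (s + h) ≤ m s' - m (s' + h))
    (hmr : m r = 0) :
    r * m t ≤ (r - t) * m 0 := by
  have key : ∀ n : ℕ, 0 < n → m t ≤ (1 - t / r + 1 / n) * m 0 := by
    intro n hn
    have hn' : (0:ℝ) < n := by exact_mod_cast hn
    set h := r / n with hh'
    have hh : 0 < h := div_pos hr hn'
    set dd : ℕ → ℝ := fun k => m (k * h) - m ((k + 1 : ℕ) * h) with hdd
    have hdmono : ∀ k k' : ℕ, k' ≤ k → dd k ≤ dd k' := by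
      intro k k' hkk
      have hkk' : (k' : ℝ) * h ≤ (k : ℝ) * h :=
        mul_le_mul_of_nonneg_right (by exact_mod_cast hkk) hh.le
      have h2 := hD ((k':ℝ) * h) ((k:ℝ) * h) h (by positivity) hkk' hh.le
      have e1 : (k:ℝ) * h + h = ((k+1 : ℕ):ℝ) * h := by push_cast; ring
      have e2 : (k':ℝ) * h + h = ((k'+1 : ℕ):ℝ) * h := by push_cast; ring
      rw [e1, e2] at h2
      exact h2
    have htel : ∀ j : ℕ, ∑ k ∈ Finset.range j, dd k = m 0 - m ((j:ℝ) * h) := by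
      intro j
      have h3 := Finset.sum_range_sub' (fun k : ℕ => m ((k:ℝ) * h)) j
      rw [hdd]
      simp only
      rw [h3]
      norm_num
    set j := Nat.floor (t / h) with hj'
    have hjh : (j:ℝ) * h ≤ t := by
      have h4 : (j:ℝ) ≤ t / h := Nat.floor_le (le_of_lt (div_pos ht hh))
      calc (j:ℝ) * h ≤ (t / h) * h := mul_le_mul_of_nonneg_right h4 hh.le
      _ = t := div_mul_cancel₀ _ hh.ne'
    have hnh : (n:ℝ) * h = r := by
      rw [hh']; field_simp
    have hjn : j ≤ n := by
      have h5 : t / h ≤ (n:ℝ) := by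
        rw [div_le_iff₀ hh, hnh]; exact htr
      calc j = Nat.floor (t / h) := hj'
      _ ≤ Nat.floor ((n:ℝ)) := Nat.floor_mono h5
      _ = n := Nat.floor_natCast n
    have hsum_n : ∑ k ∈ Finset.range n, dd k = m 0 := by
      rw [htel n, hnh, hmr, sub_zero]
    have hsplit := Finset.sum_range_add_sum_Ico dd hjn
    have hIco : ∑ k ∈ Finset.Ico j n, dd k = m ((j:ℝ) * h) := by
      have h6 := htel j
      linarith [hsplit, hsum_n, h6]
    have h1 : m ((j:ℝ) * h) ≤ ((n - j : ℕ):ℝ) * dd j := by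
      rw [← hIco]
      have h7 := Finset.sum_le_card_nsmul (Finset.Ico j n) dd (dd j)
        (fun k hk => hdmono k j (Finset.mem_Ico.1 hk).1)
      rw [Nat.card_Ico] at h7
      simpa [nsmul_eq_mul] using h7
    have h2 : (j:ℝ) * dd j ≤ m 0 - m ((j:ℝ) * h) := by
      rw [← htel j]
      have h8 := Finset.card_nsmul_le_sum (Finset.range j) dd (dd j)
        (fun k hk => hdmono j k (Finset.mem_range.1 hk).le)
      rw [Finset.card_range] at h8
      simpa [nsmul_eq_mul] using h8
    have hnj : ((n - j : ℕ):ℝ) = (n:ℝ) - j := by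
      rw [Nat.cast_sub hjn]
    rw [hnj] at h1
    have hM0 : 0 ≤ m ((j:ℝ) * h) := hnn _
    have hj0 : (0:ℝ) ≤ j := Nat.cast_nonneg j
    have hbn : (0:ℝ) ≤ (n:ℝ) - j := by
      have : (j:ℝ) ≤ n := by exact_mod_cast hjn
      linarith
    have hcomb : (n:ℝ) * m ((j:ℝ) * h) ≤ ((n:ℝ) - j) * m 0 := by nlinarith
    have hmt : m t ≤ m ((j:ℝ) * h) := hmono _ _ hjh
    have hjlb : t / h - 1 < (j:ℝ) := Nat.sub_one_lt_floor _
    have hth : t / h = t * n / r := by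
      rw [hh']
      field_simp
    have hm00 : 0 ≤ m 0 := hnn 0
    -- coefficient comparison: (n − j)/n ≤ 1 − t/r + 1/n
    have hcoef : (n:ℝ) - j ≤ n * (1 - t / r + 1 / n) := by
      rw [hth] at hjlb
      have : t * n / r - 1 < (j:ℝ) := hjlb
      have hexpand : n * (1 - t / r + 1 / n) = n - t * n / r + 1 := by
        field_simp
      rw [hexpand]
      linarith
    have hfin : (n:ℝ) * m t ≤ n * ((1 - t / r + 1 / n) * m 0) := by
      calc (n:ℝ) * m t ≤ n * m ((j:ℝ) * h) := by nlinarith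
      _ ≤ ((n:ℝ) - j) * m 0 := hcomb
      _ ≤ (n * (1 - t / r + 1 / n)) * m 0 := by nlinarith
      _ = n * ((1 - t / r + 1 / n) * m 0) := by ring
    exact le_of_mul_le_mul_left hfin hn'
  refine le_of_forall_pos_le_add fun ε hε => ?_
  obtain ⟨n, hn⟩ := exists_nat_gt (max 1 (r * m 0 / ε))
  have hn1 : (1:ℝ) < n := lt_of_le_of_lt (le_max_left _ _) hn
  have hn1' : 1 < n := by exact_mod_cast hn1
  have hn0 : 0 < n := Nat.lt_of_lt_of_le Nat.zero_lt_one hn1'.le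
  have hn0' : (0:ℝ) < n := by exact_mod_cast hn0
  have hkey := key n hn0
  have hm00 : 0 ≤ m 0 := hnn 0
  have h2 : r * m 0 / n < ε := by
    have h3 : r * m 0 / ε < n := lt_of_le_of_lt (le_max_right _ _) hn
    rw [div_lt_iff₀ hε] at h3
    rw [div_lt_iff₀ hn0']
    linarith
  have e : r * ((1 - t / r + 1 / (n:ℝ)) * m 0) = (r - t) * m 0 + (r * m 0) / n := by
    field_simp
  have h1 : r * m t ≤ r * ((1 - t / r + 1 / (n:ℝ)) * m 0) :=
    mul_le_mul_of_nonneg_left hkey hr.le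
  rw [e] at h1
  linarith

end Aux

section Main
open Filter
open scoped ENNReal NNReal RealInnerProductSpace Topology

/-- For a convex body `W ⊆ ℝ^d` with positive inradius and
`0 < r_0/2 ≤ r(W)`, one has `V_d(W) ≤ (2 r(W)/r_0) V_d(∂⁻_{r_0/2} W)`, where
`∂⁻_s W = {z ∈ W : dist(z, ∂W) ≤ s}`. -/
theorem stmt9 (d : ℕ) (W : Set (EuclideanSpace ℝ (Fin d)))
    (hWconv : Convex ℝ W) (hWcomp : IsCompact W) (hWne : W.Nonempty)
    (hin : 0 < inradius W)
    (r0 : ℝ) (hr0 : 0 < r0 / 2) (hr0in : r0 / 2 ≤ inradius W) :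
    (volume W).toReal ≤ (2 * inradius W / r0) *
      (volume {z ∈ W | Metric.infDist z (frontier W) ≤ r0 / 2}).toReal := by
  classical
  rcases Nat.eq_zero_or_pos d with hd0 | hd
  · exfalso
    subst hd0
    haveI : Subsingleton (EuclideanSpace ℝ (Fin 0)) :=
      ⟨fun a b => by ext i; exact i.elim0⟩
    have hnb : ¬ BddAbove {r : ℝ | ∃ c : EuclideanSpace ℝ (Fin 0), Metric.closedBall c r ⊆ W} := by
      rintro ⟨b, hb⟩
      have hmem : b + 1 ∈ {r : ℝ | ∃ c : EuclideanSpace ℝ (Fin 0), Metric.closedBall c r ⊆ W} := by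
        refine ⟨hWne.choose, fun x _ => ?_⟩
        have := hWne.choose_spec
        rwa [Subsingleton.elim x hWne.choose]
      have := hb hmem
      linarith
    rw [inradius, Real.sSup_of_not_bddAbove hnb] at hin
    exact lt_irrefl 0 hin
  -- now d ≥ 1
  set F := frontier W with hF
  set δ : EuclideanSpace ℝ (Fin d) → ℝ := fun z => infDist z F with hδ
  set r := inradius W with hr'
  set t := r0 / 2 with ht'
  -- a unit vector
  set e : EuclideanSpace ℝ (Fin d) := EuclideanSpace.single ⟨0, hd⟩ (1:ℝ) with he'
  have hnorme : ‖e‖ = 1 := by rw [he', EuclideanSpace.norm_single]; norm_num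
  haveI : Nontrivial (EuclideanSpace ℝ (Fin d)) := by
    refine ⟨e, 0, fun h => ?_⟩
    rw [h] at hnorme
    simp at hnorme
  -- a point outside W
  have hWnu : W ≠ univ := hWcomp.ne_univ
  obtain ⟨x₀, hx₀⟩ : ∃ x, x ∉ W := by
    by_contra hcon
    push_neg at hcon
    exact hWnu (eq_univ_of_forall hcon)
  -- frontier nonempty
  have hfr : F.Nonempty := by
    obtain ⟨p, hp, -⟩ := cross_frontier hWne.choose_spec hx₀
    exact ⟨p, hp⟩
  -- interior nonempty
  have hint : (interior W).Nonempty := by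
    have hne : {r : ℝ | ∃ c : EuclideanSpace ℝ (Fin d), Metric.closedBall c r ⊆ W}.Nonempty := by
      refine ⟨-1, 0, ?_⟩
      rw [closedBall_eq_empty.2 (by norm_num)]
      exact empty_subset _
    obtain ⟨ρ, ⟨c, hc⟩, hρ⟩ := exists_lt_of_lt_csSup hne hin
    exact ⟨c, mem_interior.2 ⟨ball c ρ, (ball_subset_closedBall).trans hc, isOpen_ball,
      mem_ball_self hρ⟩⟩
  -- bddAbove
  obtain ⟨R, hR⟩ := hWcomp.isBounded.subset_closedBall 0
  have hR0 : 0 ≤ R := by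
    have := hR hWne.choose_spec
    have h2 := mem_closedBall.1 this
    exact le_trans dist_nonneg h2
  have hbdd : BddAbove {r : ℝ | ∃ c : EuclideanSpace ℝ (Fin d), Metric.closedBall c r ⊆ W} := by
    refine ⟨2 * R, fun ρ hρ => ?_⟩
    obtain ⟨c, hc⟩ := hρ
    rcases le_or_gt ρ 0 with hρ0 | hρ0
    · linarith
    · have hcW : c ∈ W := hc (mem_closedBall_self hρ0.le)
      have hceW : c + ρ • e ∈ W := by
        apply hc
        rw [mem_closedBall, dist_comm, dist_self_add_right, norm_smul, Real.norm_eq_abs,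
          abs_of_nonneg hρ0.le, hnorme, mul_one]
      have h1 := mem_closedBall.1 (hR hcW)
      have h2 := mem_closedBall.1 (hR hceW)
      have h3 : dist (c + ρ • e) c = ρ := by
        rw [dist_comm, dist_self_add_right, norm_smul, Real.norm_eq_abs,
          abs_of_nonneg hρ0.le, hnorme, mul_one]
      have h4 := dist_triangle (c + ρ • e) (0 : EuclideanSpace ℝ (Fin d)) c
      rw [h3] at h4
      rw [dist_comm] at h1
      linarith
  -- δ ≤ r on W
  have hδle : ∀ z ∈ W, δ z ≤ r := by
    intro z hz
    exact le_csSup hbdd ⟨z, closedBall_infDist_subset hWcomp.isClosed hz⟩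
  -- measure setup
  have hWm : MeasurableSet W := hWcomp.isClosed.measurableSet
  have hδcont : Continuous δ := continuous_infDist_pt F
  have hmeas : ∀ s : ℝ, MeasurableSet {z | z ∈ W ∧ s < δ z} := fun s =>
    hWm.inter (measurableSet_lt measurable_const hδcont.measurable)
  have hfinW : volume W ≠ ⊤ := hWcomp.measure_lt_top.ne
  set m : ℝ → ℝ := fun s => (volume {z | z ∈ W ∧ s < δ z}).toReal with hm'
  have hsub : ∀ s : ℝ, {z | z ∈ W ∧ s < δ z} ⊆ W := fun s z hz => hz.1
  have hfin : ∀ s : ℝ, volume {z | z ∈ W ∧ s < δ z} ≠ ⊤ := fun s =>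
    (lt_of_le_of_lt (measure_mono (hsub s)) hWcomp.measure_lt_top).ne
  have hnn : ∀ s, 0 ≤ m s := fun s => ENNReal.toReal_nonneg
  have hmono : ∀ a b : ℝ, a ≤ b → m b ≤ m a := by
    intro a b hab
    apply ENNReal.toReal_mono (hfin a)
    apply measure_mono
    intro z hz
    exact ⟨hz.1, lt_of_le_of_lt hab hz.2⟩
  -- decrement identity
  have hdec : ∀ s h : ℝ, 0 ≤ h →
      m s - m (s + h) = (volume {z | z ∈ W ∧ s < δ z ∧ δ z ≤ s + h}).toReal := by
    intro s h h0
    have hsplit : {z | z ∈ W ∧ s < δ z} =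
        {z | z ∈ W ∧ s < δ z ∧ δ z ≤ s + h} ∪ {z | z ∈ W ∧ s + h < δ z} := by
      ext z
      simp only [mem_setOf_eq, mem_union]
      constructor
      · rintro ⟨hzW, hzδ⟩
        rcases le_or_gt (δ z) (s + h) with h1 | h1
        · exact Or.inl ⟨hzW, hzδ, h1⟩
        · exact Or.inr ⟨hzW, h1⟩
      · rintro (⟨hzW, h1, h2⟩ | ⟨hzW, h1⟩)
        · exact ⟨hzW, h1⟩
        · exact ⟨hzW, by linarith⟩
    have hdisj : Disjoint {z | z ∈ W ∧ s < δ z ∧ δ z ≤ s + h} {z | z ∈ W ∧ s + h < δ z} := by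
      rw [Set.disjoint_left]
      rintro z ⟨-, -, h1⟩ ⟨-, h2⟩
      linarith
    have := measure_union (μ := volume) hdisj (hmeas (s + h))
    rw [← hsplit] at this
    have hlayfin : volume {z | z ∈ W ∧ s < δ z ∧ δ z ≤ s + h} ≠ ⊤ := by
      refine (lt_of_le_of_lt (measure_mono ?_) hWcomp.measure_lt_top).ne
      exact fun z hz => hz.1
    rw [hm']
    simp only
    rw [this, ENNReal.toReal_add hlayfin (hfin (s + h))]
    ring
  -- decrement comparison
  have hD : ∀ s' s h : ℝ, 0 ≤ s' → s' ≤ s → 0 ≤ h → m s - m (s + h) ≤ m s' - m (s' + h) := by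
    intro s' s h hs' hss h0
    rw [hdec s h h0, hdec s' h h0]
    refine ENNReal.toReal_mono ?_ (layer_mono hWconv hWcomp hint hfr hs' hss)
    refine (lt_of_le_of_lt (measure_mono ?_) hWcomp.measure_lt_top).ne
    exact fun z hz => hz.1
  -- m r = 0
  have hmr : m r = 0 := by
    have : {z | z ∈ W ∧ r < δ z} = ∅ := by
      ext z
      simp only [mem_setOf_eq, mem_empty_iff_false, iff_false, not_and, not_lt]
      exact fun hz => hδle z hz
    rw [hm']
    simp only
    rw [this, measure_empty, ENNReal.toReal_zero]
  -- m 0 = volume W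
  have hm0 : m 0 = (volume W).toReal := by
    have hFclosed : IsClosed F := isClosed_frontier
    have hWsub : W ⊆ {z | z ∈ W ∧ 0 < δ z} ∪ F := by
      intro z hz
      rcases lt_or_ge 0 (δ z) with h1 | h1
      · exact Or.inl ⟨hz, h1⟩
      · have h2 : δ z = 0 := le_antisymm h1 infDist_nonneg
        have h3 : z ∈ closure F := (mem_closure_iff_infDist_zero hfr).2 h2
        exact Or.inr (hFclosed.closure_eq ▸ h3)
    have hF0 : volume F = 0 := Convex.addHaar_frontier volume hWconv
    have h1 : volume W ≤ volume {z | z ∈ W ∧ 0 < δ z} := by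
      calc volume W ≤ volume ({z | z ∈ W ∧ 0 < δ z} ∪ F) := measure_mono hWsub
      _ ≤ volume {z | z ∈ W ∧ 0 < δ z} + volume F := measure_union_le _ _
      _ = volume {z | z ∈ W ∧ 0 < δ z} := by rw [hF0, add_zero]
    have h2 : volume {z | z ∈ W ∧ 0 < δ z} = volume W :=
      le_antisymm (measure_mono (hsub 0)) h1
    rw [hm']
    simp only
    rw [h2]
  -- numeric lemma
  have hnum := numeric_lemma hin hr0 hr0in hnn hmono hD hmr
  rw [hm0] at hnum
  -- shell decomposition
  set S := {z | z ∈ W ∧ δ z ≤ t} with hS'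
  have hshell : (volume W).toReal = (volume S).toReal + m t := by
    have hsplit : W = S ∪ {z | z ∈ W ∧ t < δ z} := by
      ext z
      simp only [hS', mem_setOf_eq, mem_union]
      constructor
      · intro hz
        rcases le_or_gt (δ z) t with h1 | h1
        · exact Or.inl ⟨hz, h1⟩
        · exact Or.inr ⟨hz, h1⟩
      · rintro (⟨hz, -⟩ | ⟨hz, -⟩) <;> exact hz
    have hdisj : Disjoint S {z | z ∈ W ∧ t < δ z} := by
      rw [Set.disjoint_left]
      rintro z ⟨-, h1⟩ ⟨-, h2⟩
      linarith
    have hSfin : volume S ≠ ⊤ := by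
      refine (lt_of_le_of_lt (measure_mono ?_) hWcomp.measure_lt_top).ne
      exact fun z hz => hz.1
    have := measure_union (μ := volume) hdisj (hmeas t)
    rw [← hsplit] at this
    rw [this, ENNReal.toReal_add hSfin (hfin t)]
  -- conclude
  have hcoef : 2 * r / r0 = r / t := by
    rw [ht']
    ring
  rw [hcoef]
  set V := (volume W).toReal
  set Sv := (volume S).toReal
  have htpos : 0 < t := hr0
  rw [div_mul_eq_mul_div, le_div_iff₀ htpos]
  -- goal : V * t ≤ r * Sv
  have hV : V = Sv + m t := hshell
  nlinarith [hnum, hnn t]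

end Main
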